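/- Suppose two parameter vectors θ and θ' induce joint distributions for (A, C, Y, R) both satisfying treatment-independent missingness R ⊥ A | (C,Y) and positivity pr(R=1|a,c,y) > 0. If there exists a set F of positive probability such that for all (a,c,y) ∈ F the likelihood ratio pr(a,y|c;θ)/pr(a,y|c;θ') is not expressible as a function h(c,y) of (c,y) alone, then the observed-data distributions pr(a,c,y,R=1;θ) and pr(a,c,y,R=1;θ') are not identical, i.e., the parameter distinguishing θ from θ' is identifiable from the observed data. -/

import Mathlib

/-- Proposition 1: Two parameter values `θ, θ'` induce joint densities
factored as `pr(a,c,y,R=1) = pr(c) · pr(a,y|c) · pr(R=1|c,y)`, where the missing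
probability depends only on `(c,y)` (treatment-independent missingness) and is positive.
If for every function `h(c,y)` there is a set `F` of positive measure on which the
likelihood ratio `pr(a,y|c;θ)/pr(a,y|c;θ')` differs from `h(c,y)`, then the
observed-data distributions at `R=1` differ on a set of positive measure. -/
theorem identifiability_from_likelihood_ratio
    {γ υ : Type*} [MeasurableSpace γ] [MeasurableSpace υ]
    (ν : MeasureTheory.Measure (Bool × γ × υ))
    (prAY prAY' : Bool → γ → υ → ℝ)   -- pr(a,y|c;θ) and pr(a,y|c;θ')
    (prC prC' : γ → ℝ)                -- pr(c;θ) and pr(c;θ')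
    (πR πR' : γ → υ → ℝ)              -- pr(R=1|c,y;θ) and pr(R=1|c,y;θ'), independent of a
    (hπpos : ∀ c y, 0 < πR c y) (hπ'pos : ∀ c y, 0 < πR' c y)
    (hCpos : ∀ c, 0 < prC c) (hC'pos : ∀ c, 0 < prC' c)
    (hAYpos : ∀ a c y, 0 < prAY a c y) (hAY'pos : ∀ a c y, 0 < prAY' a c y)
    (hratio : ∀ h : γ → υ → ℝ, ∃ F : Set (Bool × γ × υ), ν F ≠ 0 ∧
      ∀ p ∈ F, prAY p.1 p.2.1 p.2.2 / prAY' p.1 p.2.1 p.2.2 ≠ h p.2.1 p.2.2) :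
    ∃ F : Set (Bool × γ × υ), ν F ≠ 0 ∧
      ∀ p ∈ F,
        prC p.2.1 * prAY p.1 p.2.1 p.2.2 * πR p.2.1 p.2.2 ≠
          prC' p.2.1 * prAY' p.1 p.2.1 p.2.2 * πR' p.2.1 p.2.2 := by
  obtain ⟨F, hF, hne⟩ := hratio (fun c y => (prC' c * πR' c y) / (prC c * πR c y))
  refine ⟨F, hF, fun p hp heq => hne p hp ?_⟩
  obtain ⟨a, c, y⟩ := p
  have h1 := (hAY'pos a c y).ne'
  have h2 := (mul_pos (hCpos c) (hπpos c y)).ne'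
  simp only at heq ⊢
  field_simp
  rw [eq_div_iff h2]
  linarith [heq]
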